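/- Let G be a directed multigraph and E a minimum-weight Eulerian extension of G with respect to a weight function ω obtained after shortest-path preprocessing (ω satisfies the triangle inequality: ω(u,w) ≤ ω(u,v) + ω(v,w) for all vertices u, v, w). Then there exists an Eulerian extension E' of G with ω(E') ≤ ω(E) such that every maximal trail in E' visits every vertex at most once (i.e., each maximal trail is a path or a cycle). -/

import Mathlib

/-!  STATEMENT 15: Let `G` be a directed multigraph and `E` a minimum-weight Eulerian
extension of `G` with respect to a weight function `ω` satisfying the triangle inequality
(shortest-path preprocessing).  Then there is an Eulerian extension `E'` of `G` with
`ω(E') ≤ ω(E)` such that every maximal trail in `E'` visits every vertex at most once,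
i.e., each maximal trail is a path or a cycle. -/

namespace Stmt15

variable {V : Type*}

def IsWalkFrom : V → V → List (V × V) → Prop
  | u, w, [] => u = w
  | u, w, a :: L => a.1 = u ∧ IsWalkFrom a.2 w L

def IsEulerian (A : Multiset (V × V)) : Prop :=
  ∃ (v : V) (L : List (V × V)), IsWalkFrom v v L ∧ (↑L : Multiset (V × V)) = A ∧
    ∀ x : V, x = v ∨ ∃ a ∈ L, a.1 = x ∨ a.2 = x

/-- Total weight of a multiset of arcs. -/
def wgt (ω : V × V → NNReal) (E : Multiset (V × V)) : NNReal :=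
  (E.map ω).sum

/-! ### Auxiliary lemmas about walks -/

theorem walk_append {L₁ L₂ : List (V×V)} {u m w : V}
    (h₁ : IsWalkFrom u m L₁) (h₂ : IsWalkFrom m w L₂) : IsWalkFrom u w (L₁ ++ L₂) := by
  induction L₁ generalizing u with
  | nil => exact h₁ ▸ h₂
  | cons a T ih => exact ⟨h₁.1, ih h₁.2⟩

theorem walk_append_inv {L₁ L₂ : List (V×V)} {u w : V} (h : IsWalkFrom u w (L₁ ++ L₂)) :
    ∃ m, IsWalkFrom u m L₁ ∧ IsWalkFrom m w L₂ := by
  induction L₁ generalizing u with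
  | nil => exact ⟨u, rfl, h⟩
  | cons a T ih => obtain ⟨m, h1, h2⟩ := ih h.2; exact ⟨m, ⟨h.1, h1⟩, h2⟩

theorem walk_split_at {u w m : V} {T : List (V×V)} (h : IsWalkFrom u w T) {c : V×V}
    (hc : c ∈ T) (hm : c.1 = m ∨ c.2 = m) :
    ∃ T₁ T₂, T = T₁ ++ T₂ ∧ IsWalkFrom u m T₁ ∧ IsWalkFrom m w T₂ := by
  obtain ⟨T₁, T₂, rfl⟩ := List.append_of_mem hc
  obtain ⟨m₁, h1, h2⟩ := walk_append_inv h
  rcases hm with hm | hm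
  · refine ⟨T₁, c :: T₂, rfl, ?_, ⟨hm, h2.2⟩⟩
    rw [← hm, h2.1]; exact h1
  · refine ⟨T₁ ++ [c], T₂, by simp, walk_append h1 ⟨h2.1, ?_⟩, ?_⟩
    · exact hm
    · rw [← hm]; exact h2.2

theorem walk_head {u w : V} {T : List (V×V)} (h : IsWalkFrom u w T) (hne : T ≠ []) :
    ∃ d ∈ T, d.1 = u := by
  cases T with
  | nil => exact absurd rfl hne
  | cons a T => exact ⟨a, List.mem_cons_self, h.1⟩

theorem walk_prop (Z : V → Prop) {Q : List (V×V)} {u w : V} (h : IsWalkFrom u w Q)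
    (hQ : ∀ g ∈ Q, (Z g.1 ↔ Z g.2)) : (Z u ↔ Z w) ∧ (Z w → ∀ g ∈ Q, Z g.1 ∧ Z g.2) := by
  induction Q generalizing u with
  | nil => subst h; simp
  | cons a T ih =>
    obtain ⟨ha, hT⟩ := h
    obtain ⟨iff₂, all₂⟩ := ih hT (fun g hg => hQ g (List.mem_cons_of_mem _ hg))
    have hQa := hQ a (List.mem_cons_self)
    subst ha
    refine ⟨hQa.trans iff₂, fun hw g hg => ?_⟩
    rcases List.mem_cons.mp hg with rfl | hg
    · exact ⟨hQa.mpr (iff₂.mpr hw), iff₂.mpr hw⟩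
    · exact all₂ hw g hg

theorem not_nodup_decomp {L : List (V×V)} (h : ¬ (L.map Prod.snd).Nodup) :
    ∃ L₁ e L₂, L = L₁ ++ e :: L₂ ∧ e.2 ∈ L₂.map Prod.snd := by
  induction L with
  | nil => simp at h
  | cons a T ih =>
    by_cases ha : a.2 ∈ T.map Prod.snd
    · exact ⟨[], a, T, rfl, ha⟩
    · have hT : ¬ (T.map Prod.snd).Nodup := fun hn => h (by simp [List.nodup_cons, ha, hn])
      obtain ⟨L₁, e, L₂, rfl, he⟩ := ih hT
      exact ⟨a :: L₁, e, L₂, rfl, he⟩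

/-- From a "bad" trail (one that repeats a vertex) extract a pattern suitable for
shortcutting: two consecutive arcs `(x,y), (y,z)` such that the middle vertex `y`
is visited elsewhere by the trail. -/
theorem extract {v w : V} {L : List (V×V)} (h : IsWalkFrom v w L)
    (hbad : ¬((L.map Prod.snd).Nodup ∧ (v = w ∨ v ∉ L.map Prod.snd))) :
    ∃ (x y z : V) (P S : List (V × V)), L = P ++ (x,y) :: (y,z) :: S ∧
      IsWalkFrom v x P ∧ IsWalkFrom z w S ∧
      (y = x ∨ y = z ∨ (∃ c ∈ P, c.1 = y ∨ c.2 = y) ∨ (∃ c ∈ S, c.1 = y ∨ c.2 = y)) := by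
  by_cases hnd : (L.map Prod.snd).Nodup
  · have hvw : ¬(v = w ∨ v ∉ L.map Prod.snd) := fun hc => hbad ⟨hnd, hc⟩
    push_neg at hvw
    obtain ⟨hne, hv⟩ := hvw
    obtain ⟨e, heL, hev⟩ := List.mem_map.mp hv
    obtain ⟨L₁, L₂, rfl⟩ := List.append_of_mem heL
    obtain ⟨m, h1, h2⟩ := walk_append_inv h
    cases L₂ with
    | nil =>
      exact absurd (hev ▸ h2.2 : v = w) hne
    | cons f L₂' =>
      refine ⟨e.1, v, f.2, L₁, L₂', ?_, ?_, h2.2.2, ?_⟩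
      · have he : e = (e.1, v) := by rw [← hev]
        have hf : f = (v, f.2) := by rw [← hev, ← h2.2.1]
        rw [← he, ← hf]
      · rw [h2.1]; exact h1
      · cases L₁ with
        | nil => exact Or.inl (h1.trans h2.1.symm)
        | cons g T => exact Or.inr (Or.inr (Or.inl ⟨g, List.mem_cons_self, Or.inl h1.1⟩))
  · obtain ⟨L₁, e, L₂, rfl, he2⟩ := not_nodup_decomp hnd
    obtain ⟨m, h1, h2⟩ := walk_append_inv h
    cases L₂ with
    | nil => simp at he2
    | cons f L₂' =>
      refine ⟨e.1, e.2, f.2, L₁, L₂', ?_, ?_, h2.2.2, ?_⟩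
      · have hf : f = (e.2, f.2) := by rw [← h2.2.1]
        rw [← hf]
      · rw [h2.1]; exact h1
      · rcases List.mem_cons.mp (by simpa using he2 : e.2 ∈ f.2 :: L₂'.map Prod.snd) with hz | hz
        · exact Or.inr (Or.inl hz)
        · obtain ⟨c, hc, hcy⟩ := List.mem_map.mp hz
          exact Or.inr (Or.inr (Or.inr ⟨c, hc, Or.inr hcy⟩))

/-- The key surgery: replacing a pair of consecutive arcs `(x,y), (y,z)` of a trail
(whose middle vertex `y` is visited again by the trail) by the single shortcut arc
`(x,z)` preserves being Eulerian. -/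
theorem surgery [DecidableEq V] {M : Multiset (V × V)} (hM : IsEulerian M)
    {v w x y z : V} {P S : List (V × V)}
    (hP : IsWalkFrom v x P) (hS : IsWalkFrom z w S)
    (hsub : (↑(P ++ (x,y) :: (y,z) :: S) : Multiset (V × V)) ≤ M)
    (hocc : y = x ∨ y = z ∨ (∃ c ∈ P, c.1 = y ∨ c.2 = y) ∨ (∃ c ∈ S, c.1 = y ∨ c.2 = y)) :
    IsEulerian (M - {(x,y),(y,z)} + {(x,z)}) := by
  obtain ⟨v₀, W, hW, hWM, hcov⟩ := hM
  have hsub' : (x,y) ::ₘ (y,z) ::ₘ ((↑P : Multiset (V×V)) + ↑S) ≤ M := by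
    have h0 : (↑(P ++ (x,y) :: (y,z) :: S) : Multiset (V × V))
        = (x,y) ::ₘ (y,z) ::ₘ ((↑P : Multiset (V×V)) + ↑S) :=
      Multiset.coe_eq_coe.mpr (List.perm_middle.trans ((List.perm_middle).cons _))
    rwa [h0] at hsub
  have haW : (x,y) ∈ W := by
    have h1 : (x,y) ∈ M := Multiset.mem_of_le hsub' (Multiset.mem_cons_self _ _)
    rw [← hWM] at h1; exact h1
  obtain ⟨W₁, W₂, rfl⟩ := List.append_of_mem haW
  obtain ⟨m₁, hW1, hW2⟩ := walk_append_inv hW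
  have hRwalk : IsWalkFrom y x (W₂ ++ W₁) :=
    walk_append hW2.2 (by rw [show (x:V) = m₁ from hW2.1]; exact hW1)
  have hRM : M = (x,y) ::ₘ (↑(W₂ ++ W₁) : Multiset (V×V)) := by
    rw [← hWM]
    exact Multiset.coe_eq_coe.mpr (List.perm_middle.trans ((List.perm_append_comm).cons _))
  have hbR : (y,z) ∈ W₂ ++ W₁ := by
    have h2 : (y,z) ::ₘ ((↑P : Multiset (V×V)) + ↑S) ≤ ↑(W₂ ++ W₁) := by
      rw [hRM] at hsub'
      exact (Multiset.cons_le_cons_iff _).mp hsub'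
    exact Multiset.mem_coe.mp (Multiset.mem_of_le h2 (Multiset.mem_cons_self _ _))
  obtain ⟨R₁, R₂, hRsplit⟩ := List.append_of_mem hbR
  have hRw : IsWalkFrom y x (R₁ ++ (y,z) :: R₂) := hRsplit ▸ hRwalk
  obtain ⟨m₂, hR1, hR2'⟩ := walk_append_inv hRw
  have hR1' : IsWalkFrom y y R₁ := by
    have hym : (y:V) = m₂ := hR2'.1
    exact hym.symm ▸ hR1
  have hC2 : IsWalkFrom z z (R₂ ++ [(x,z)]) := walk_append hR2'.2 ⟨rfl, rfl⟩
  have hMeq : M = ((↑R₁ : Multiset (V×V)) + ↑R₂) + {(x,y),(y,z)} := by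
    rw [hRM, hRsplit]
    refine Multiset.coe_eq_coe.mpr ?_
    exact ((List.perm_middle.cons _)).trans
      (List.perm_append_comm (l₁ := [(x,y),(y,z)]) (l₂ := R₁ ++ R₂))
  have hPS : ((↑P : Multiset (V×V)) + ↑S) ≤ (↑R₁ : Multiset (V×V)) + ↑R₂ := by
    have h3 : M = (x,y) ::ₘ (y,z) ::ₘ ((↑R₁ : Multiset (V×V)) + ↑R₂) := by
      rw [hMeq]
      exact Multiset.coe_eq_coe.mpr List.perm_append_comm
    rw [h3] at hsub'
    exact (Multiset.cons_le_cons_iff _).mp ((Multiset.cons_le_cons_iff _).mp hsub')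
  have hM' : M - {(x,y),(y,z)} + {(x,z)}
      = (↑R₁ : Multiset (V×V)) + ↑(R₂ ++ [(x,z)]) := by
    rw [hMeq, add_tsub_cancel_right]
    exact Multiset.coe_eq_coe.mpr ((List.append_assoc _ _ _) ▸ List.Perm.refl _)
  -- find a common vertex of R₁ and C₂ = R₂ ++ [(x,z)]
  set Z : V → Prop := fun m => ∃ h ∈ R₂ ++ [(x,z)], h.1 = m ∨ h.2 = m with hZdef
  have hZx : Z x := ⟨(x,z), List.mem_append_right _ (List.mem_singleton.mpr rfl), Or.inl rfl⟩
  have hZz : Z z := ⟨(x,z), List.mem_append_right _ (List.mem_singleton.mpr rfl), Or.inr rfl⟩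
  have hcommon : ∃ m, (m = y ∨ ∃ g ∈ R₁, g.1 = m ∨ g.2 = m) ∧ Z m := by
    by_contra hdis
    push_neg at hdis
    have hZy : ¬ Z y := hdis y (Or.inl rfl)
    have homog : ∀ g : V×V, g ∈ ((↑P : Multiset (V×V)) + ↑S) → (Z g.1 ↔ Z g.2) := by
      intro g hg
      rcases Multiset.mem_add.mp (Multiset.mem_of_le hPS hg) with h1 | h2
      · have hg1 : ¬ Z g.1 := hdis g.1 (Or.inr ⟨g, Multiset.mem_coe.mp h1, Or.inl rfl⟩)
        have hg2 : ¬ Z g.2 := hdis g.2 (Or.inr ⟨g, Multiset.mem_coe.mp h1, Or.inr rfl⟩)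
        simp [hg1, hg2]
      · have hgC : g ∈ R₂ ++ [(x,z)] := List.mem_append_left _ (Multiset.mem_coe.mp h2)
        exact iff_of_true ⟨g, hgC, Or.inl rfl⟩ ⟨g, hgC, Or.inr rfl⟩
    have hPp := walk_prop Z hP
      (fun g hg => homog g (Multiset.mem_add.mpr (Or.inl (Multiset.mem_coe.mpr hg))))
    have hSp := walk_prop Z hS
      (fun g hg => homog g (Multiset.mem_add.mpr (Or.inr (Multiset.mem_coe.mpr hg))))
    rcases hocc with h | h | ⟨c, hc, hcy⟩ | ⟨c, hc, hcy⟩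
    · apply hZy; rw [h]; exact hZx
    · apply hZy; rw [h]; exact hZz
    · have hce := (hPp.2 hZx) c hc
      rcases hcy with h | h
      · apply hZy; rw [← h]; exact hce.1
      · apply hZy; rw [← h]; exact hce.2
    · have hall := hSp.2 (hSp.1.mp hZz) c hc
      rcases hcy with h | h
      · apply hZy; rw [← h]; exact hall.1
      · apply hZy; rw [← h]; exact hall.2
  obtain ⟨m, hm, harc, harcmem, harcm⟩ := hcommon
  obtain ⟨T₁, T₂, hTsplit, hT1, hT2⟩ := walk_split_at hC2 harcmem harcm
  obtain ⟨U₁, U₂, hUsplit, hU1, hU2⟩ :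
      ∃ U₁ U₂, R₁ = U₁ ++ U₂ ∧ IsWalkFrom y m U₁ ∧ IsWalkFrom m y U₂ := by
    rcases hm with rfl | ⟨g, hg, hgm⟩
    · exact ⟨[], R₁, rfl, rfl, hR1'⟩
    · exact walk_split_at hR1' hg hgm
  have hcoe : (↑(T₁ ++ (U₂ ++ (U₁ ++ T₂))) : Multiset (V×V))
      = (↑R₁ : Multiset (V×V)) + ↑(R₂ ++ [(x,z)]) := by
    rw [hUsplit, hTsplit]
    show (↑T₁ + (↑U₂ + (↑U₁ + ↑T₂)) : Multiset (V×V)) = (↑U₁ + ↑U₂) + (↑T₁ + ↑T₂)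
    abel
  refine ⟨z, T₁ ++ (U₂ ++ (U₁ ++ T₂)),
    walk_append hT1 (walk_append hU2 (walk_append hU1 hT2)), by rw [hcoe, hM'], ?_⟩
  intro u
  by_cases huz : u = z
  · exact Or.inl huz
  right
  have hmem : ∀ e : V×V, e ∈ ((↑R₁ : Multiset (V×V)) + ↑(R₂ ++ [(x,z)])) →
      e ∈ T₁ ++ (U₂ ++ (U₁ ++ T₂)) := by
    intro e he
    have : e ∈ (↑(T₁ ++ (U₂ ++ (U₁ ++ T₂))) : Multiset (V×V)) := by rw [hcoe]; exact he
    exact Multiset.mem_coe.mp this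
  have hmem12 : ∀ e : V×V, e ∈ ((↑R₁ : Multiset (V×V)) + ↑R₂) →
      e ∈ T₁ ++ (U₂ ++ (U₁ ++ T₂)) := by
    intro e he
    refine hmem e (Multiset.mem_add.mpr ?_)
    rcases Multiset.mem_add.mp he with ha | hb
    · exact Or.inl ha
    · exact Or.inr (Multiset.mem_coe.mpr (List.mem_append_left _ (Multiset.mem_coe.mp hb)))
  have hxz : (x,z) ∈ T₁ ++ (U₂ ++ (U₁ ++ T₂)) :=
    hmem _ (Multiset.mem_add.mpr (Or.inr
      (Multiset.mem_coe.mpr (List.mem_append_right _ (List.mem_singleton.mpr rfl)))))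
  have hcov' : ∃ d ∈ W₁ ++ (x,y) :: W₂, d.1 = u ∨ d.2 = u := by
    rcases hcov u with rfl | ⟨d, hd, hdu⟩
    · obtain ⟨d, hd, hdu⟩ := walk_head hW (by simp)
      exact ⟨d, hd, Or.inl hdu⟩
    · exact ⟨d, hd, hdu⟩
  obtain ⟨d, hdW, hdu⟩ := hcov'
  have hdM : d ∈ ((↑R₁ : Multiset (V×V)) + ↑R₂) + ({(x,y),(y,z)} : Multiset (V×V)) := by
    rw [← hMeq, ← hWM]
    exact Multiset.mem_coe.mpr hdW
  have hyu : u = y → ∃ a ∈ T₁ ++ (U₂ ++ (U₁ ++ T₂)), a.1 = u ∨ a.2 = u := by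
    intro huy
    rcases hocc with h | h | ⟨c, hc, hcy⟩ | ⟨c, hc, hcy⟩
    · exact ⟨(x,z), hxz, Or.inl (by rw [huy, h])⟩
    · exact absurd (huy.trans h) huz
    · refine ⟨c, hmem12 c (Multiset.mem_of_le hPS
        (Multiset.mem_add.mpr (Or.inl (Multiset.mem_coe.mpr hc)))), ?_⟩
      rw [huy]; exact hcy
    · refine ⟨c, hmem12 c (Multiset.mem_of_le hPS
        (Multiset.mem_add.mpr (Or.inr (Multiset.mem_coe.mpr hc)))), ?_⟩
      rw [huy]; exact hcy
  rcases Multiset.mem_add.mp hdM with h1 | h2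
  · exact ⟨d, hmem12 d h1, hdu⟩
  · have h2' : d = (x,y) ∨ d = (y,z) := by
      rcases Multiset.mem_cons.mp h2 with h | h
      · exact Or.inl h
      · exact Or.inr (Multiset.mem_singleton.mp h)
    rcases h2' with rfl | rfl
    · rcases hdu with h | h
      · exact ⟨(x,z), hxz, Or.inl h⟩
      · exact hyu h.symm
    · rcases hdu with h | h
      · exact hyu h.symm
      · exact absurd h.symm huz

theorem wgt_add (ω : V × V → NNReal) (M N : Multiset (V×V)) :
    wgt ω (M + N) = wgt ω M + wgt ω N := by
  simp [wgt]

/-- The property that every maximal trail is a path or a cycle. -/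
def TP [DecidableEq V] (E' : Multiset (V × V)) : Prop :=
  ∀ (v w : V) (L : List (V × V)), IsWalkFrom v w L →
    (↑L : Multiset (V × V)) ≤ E' →
    (∀ a ∈ E' - (↑L : Multiset (V × V)), a.2 ≠ v ∧ a.1 ≠ w) →
    (L.map Prod.snd).Nodup ∧ (v = w ∨ v ∉ L.map Prod.snd)

theorem not_TP [DecidableEq V] {E : Multiset (V×V)} (h : ¬ TP E) :
    ∃ (v w : V) (L : List (V × V)), IsWalkFrom v w L ∧ (↑L : Multiset (V×V)) ≤ E ∧
      ¬((L.map Prod.snd).Nodup ∧ (v = w ∨ v ∉ L.map Prod.snd)) := by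
  unfold TP at h
  push_neg at h
  obtain ⟨v, w, L, h1, h2, h3, h4⟩ := h
  refine ⟨v, w, L, h1, h2, ?_⟩
  rintro ⟨hnd, hvw⟩
  obtain ⟨hne, hmem⟩ := h4 hnd
  rcases hvw with h | h
  · exact hne h
  · exact h hmem

theorem step [DecidableEq V] (A : Multiset (V×V)) (ω : V × V → NNReal)
    (htri : ∀ u v w : V, ω (u, w) ≤ ω (u, v) + ω (v, w))
    (E : Multiset (V×V)) (hE : IsEulerian (A + E))
    {v w : V} {L : List (V×V)} (hL : IsWalkFrom v w L) (hLE : (↑L : Multiset (V×V)) ≤ E)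
    (hbad : ¬((L.map Prod.snd).Nodup ∧ (v = w ∨ v ∉ L.map Prod.snd))) :
    ∃ E₂ : Multiset (V×V), IsEulerian (A + E₂) ∧ wgt ω E₂ ≤ wgt ω E ∧
      Multiset.card E₂ < Multiset.card E := by
  obtain ⟨x, y, z, P, S, rfl, hP, hS, hocc⟩ := extract hL hbad
  have hsE : ({(x,y),(y,z)} : Multiset (V×V)) ≤ E := by
    refine le_trans ?_ hLE
    have h0 : (↑(P ++ (x,y) :: (y,z) :: S) : Multiset (V × V))
        = (x,y) ::ₘ (y,z) ::ₘ ((↑P : Multiset (V×V)) + ↑S) :=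
      Multiset.coe_eq_coe.mpr (List.perm_middle.trans ((List.perm_middle).cons _))
    rw [h0]
    exact Multiset.cons_le_cons _ (Multiset.cons_le_cons _ (Multiset.zero_le _))
  have hEeq : E - {(x,y),(y,z)} + {(x,y),(y,z)} = E := tsub_add_cancel_of_le hsE
  refine ⟨E - {(x,y),(y,z)} + {(x,z)}, ?_, ?_, ?_⟩
  · have hAE : A + (E - {(x,y),(y,z)} + {(x,z)})
        = (A + E) - {(x,y),(y,z)} + {(x,z)} := by
      have h1 : A + E = (A + (E - {(x,y),(y,z)})) + {(x,y),(y,z)} := by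
        rw [add_assoc, hEeq]
      rw [h1, add_tsub_cancel_right, add_assoc]
    rw [hAE]
    exact surgery hE hP hS (le_trans hLE (self_le_add_left E A)) hocc
  · have h1 : wgt ω (E - {(x,y),(y,z)} + {(x,z)})
        = wgt ω (E - {(x,y),(y,z)}) + ω (x,z) := by
      rw [wgt_add]; congr 1; simp [wgt]
    have h2 : wgt ω E = wgt ω (E - {(x,y),(y,z)}) + (ω (x,y) + ω (y,z)) := by
      conv_lhs => rw [← hEeq]
      rw [wgt_add]; congr 1; simp [wgt]
    rw [h1, h2]
    exact add_le_add (le_refl _) (htri x y z)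
  · have h3 : Multiset.card E = Multiset.card (E - {(x,y),(y,z)}) + 2 := by
      conv_lhs => rw [← hEeq]
      simp
    have h4 : Multiset.card (E - {(x,y),(y,z)} + {(x,z)})
        = Multiset.card (E - {(x,y),(y,z)}) + 1 := by simp
    omega

theorem aux [DecidableEq V] (A : Multiset (V×V)) (ω : V × V → NNReal)
    (htri : ∀ u v w : V, ω (u, w) ≤ ω (u, v) + ω (v, w)) :
    ∀ (n : ℕ) (E : Multiset (V×V)), Multiset.card E ≤ n → IsEulerian (A + E) →
      ∃ E', IsEulerian (A + E') ∧ wgt ω E' ≤ wgt ω E ∧ TP E' := by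
  intro n
  induction n with
  | zero =>
    intro E hc hE
    by_cases h : TP E
    · exact ⟨E, hE, le_rfl, h⟩
    · exfalso
      obtain ⟨v, w, L, hL, hLE, hconc⟩ := not_TP h
      obtain ⟨E₂, -, -, hcard⟩ := step A ω htri E hE hL hLE hconc
      omega
  | succ n ih =>
    intro E hc hE
    by_cases h : TP E
    · exact ⟨E, hE, le_rfl, h⟩
    · obtain ⟨v, w, L, hL, hLE, hconc⟩ := not_TP h
      obtain ⟨E₂, hE₂, hw₂, hcard⟩ := step A ω htri E hE hL hLE hconc
      obtain ⟨E', h1, h2, h3⟩ := ih E₂ (by omega) hE₂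
      exact ⟨E', h1, le_trans h2 hw₂, h3⟩

theorem exists_extension_with_simple_maximal_trails [DecidableEq V]
    (A : Multiset (V × V)) (ω : V × V → NNReal)
    -- triangle inequality (guaranteed by shortest-path preprocessing):
    (htri : ∀ u v w : V, ω (u, w) ≤ ω (u, v) + ω (v, w))
    (E : Multiset (V × V))
    -- `E` is a minimum-weight Eulerian extension of `G = (V, A)`:
    (hE : IsEulerian (A + E))
    (hmin : ∀ E'' : Multiset (V × V), IsEulerian (A + E'') → wgt ω E ≤ wgt ω E'') :
    ∃ E' : Multiset (V × V), IsEulerian (A + E') ∧ wgt ω E' ≤ wgt ω E ∧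
      -- every maximal trail `(v, w, L)` in `E'` visits every vertex at most once
      ∀ (v w : V) (L : List (V × V)), IsWalkFrom v w L →
        (↑L : Multiset (V × V)) ≤ E' →
        (∀ a ∈ E' - (↑L : Multiset (V × V)), a.2 ≠ v ∧ a.1 ≠ w) →
        (L.map Prod.snd).Nodup ∧ (v = w ∨ v ∉ L.map Prod.snd) := by
  obtain ⟨E', h1, h2, h3⟩ := aux A ω htri (Multiset.card E) E le_rfl hE
  exact ⟨E', h1, h2, h3⟩

end Stmt15
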